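/- If two homogeneous tropical ideals I ⊆ J in the semiring of tropical polynomials have the same Hilbert function (i.e., for each degree d the valuated matroids M_d(I) and M_d(J) have equal rank), then I = J. -/

import Mathlib

open MvPolynomial

/-- `I` is a homogeneous tropical ideal of `R[x₀,…,xₙ]`, where `R = Tropical R₀` is a
valuative semifield (the multiplicative group `R₀ \ {∞}` is totally ordered and tropical
addition is `min`): `I` is a homogeneous ideal each of whose graded pieces `I_d` is the
set of vectors of a valuated matroid on the degree-`d` monomials, i.e. satisfies the
vector (monomial) elimination axiom. -/
def IsHomogTropicalIdeal {n : ℕ} {R₀ : Type*} [LinearOrderedAddCommGroupWithTop R₀]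
    (I : Ideal (MvPolynomial (Fin (n + 1)) (Tropical R₀))) : Prop :=
  (∀ f ∈ I, ∀ d : ℕ, homogeneousComponent d f ∈ I) ∧
  ∀ d : ℕ, ∀ f ∈ I, ∀ g ∈ I, f.IsHomogeneous d → g.IsHomogeneous d →
    ∀ u : Fin (n + 1) →₀ ℕ, coeff u f = coeff u g → coeff u f ≠ 0 →
      ∃ h ∈ I, h.IsHomogeneous d ∧ coeff u h = 0 ∧
        (∀ v, coeff v f + coeff v g ≤ coeff v h) ∧
        (∀ v, coeff v f ≠ coeff v g → coeff v h = coeff v f + coeff v g)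

/-- The Hilbert function of a homogeneous tropical ideal: `H_I(d)` is the rank of the
valuated matroid `M_d(I)` on the degree-`d` monomials whose vectors are `I_d`, i.e. the
maximal size of a set `S` of degree-`d` monomials supporting no nonzero element of
`I_d`. -/
noncomputable def tropicalHilbert {n : ℕ} {R₀ : Type*} [LinearOrderedAddCommGroupWithTop R₀]
    (I : Ideal (MvPolynomial (Fin (n + 1)) (Tropical R₀))) (d : ℕ) : ℕ :=
  sSup {k : ℕ | ∃ S : Finset ((Fin (n + 1)) →₀ ℕ), S.card = k ∧
    (∀ u ∈ S, (∑ i ∈ u.support, u i) = d) ∧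
    ∀ f ∈ I, f.IsHomogeneous d → f ≠ 0 → ¬ f.support ⊆ S}

namespace TropHilbAux

open Finset Tropical

variable {n : ℕ} {R₀ : Type*} [LinearOrderedAddCommGroupWithTop R₀]

local notation "Mono" => (Fin (n + 1)) →₀ ℕ
local notation "Poly" => MvPolynomial (Fin (n + 1)) (Tropical R₀)

/-! ### Tropical semiring helpers -/

lemma trop_eq_zero_iff {a : Tropical R₀} : a = 0 ↔ untrop a = ⊤ :=
  ⟨fun h => by rw [h, untrop_zero], fun h => untrop_injective (by rw [h, untrop_zero])⟩

lemma untrop_ne_top {a : Tropical R₀} (h : a ≠ 0) : untrop a ≠ ⊤ :=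
  fun h' => h (trop_eq_zero_iff.mpr h')

lemma tmul_eq_zero_iff {a b : Tropical R₀} : a * b = 0 ↔ a = 0 ∨ b = 0 := by
  simp only [trop_eq_zero_iff, untrop_mul]
  exact LinearOrderedAddCommGroupWithTop.add_eq_top

lemma cancel_add {a b : R₀} (ha : a ≠ ⊤) : b + -a + a = b := by
  rw [add_assoc, add_comm (-a) a, LinearOrderedAddCommGroupWithTop.add_neg_cancel_of_ne_top ha,
    add_zero]

/-! ### Polynomial helpers -/

lemma degree_of_homog {f : Poly} {d : ℕ} (hf : f.IsHomogeneous d) {u : Mono}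
    (hu : coeff u f ≠ 0) : (∑ i ∈ u.support, u i) = d := by
  have h : (Finsupp.weight 1) u = d := hf hu
  rw [← h, show (1 : Fin (n + 1) → ℕ) = fun _ => 1 from rfl, ← Finsupp.degree_eq_weight_one]
  rfl

lemma homog_C_mul {f : Poly} {d : ℕ} (hf : f.IsHomogeneous d) (c : Tropical R₀) :
    (C c * f).IsHomogeneous d := fun u hu =>
  hf (fun h0 => hu (by rw [coeff_C_mul, h0, mul_zero]))

lemma support_C_mul {f : Poly} {c : Tropical R₀} (hc : c ≠ 0) :
    (C c * f).support = f.support := by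
  ext u
  simp only [mem_support_iff, coeff_C_mul, ne_eq, tmul_eq_zero_iff, hc, false_or]

lemma ne_zero_of_mem_support {f : Poly} {u : Mono} (hu : u ∈ f.support) : f ≠ 0 := by
  intro h
  rw [h] at hu
  simp at hu

/-! ### Independence -/

def IndOn (K : Ideal Poly) (d : ℕ) (S : Finset Mono) : Prop :=
  (∀ u ∈ S, (∑ i ∈ u.support, u i) = d) ∧
  ∀ f ∈ K, f.IsHomogeneous d → f ≠ 0 → ¬ f.support ⊆ S

lemma tropicalHilbert_eq (K : Ideal Poly) (d : ℕ) :
    tropicalHilbert K d = sSup {k : ℕ | ∃ S : Finset Mono, S.card = k ∧ IndOn K d S} := rfl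

lemma indOn_subset {K : Ideal Poly} {d : ℕ} {S T : Finset Mono} (h : IndOn K d S)
    (hT : T ⊆ S) : IndOn K d T :=
  ⟨fun u hu => h.1 u (hT hu),
   fun f hf hfd hf0 hsub => h.2 f hf hfd hf0 (hsub.trans hT)⟩

lemma indOn_empty (K : Ideal Poly) (d : ℕ) : IndOn K d ∅ :=
  ⟨fun _ h => absurd h (Finset.notMem_empty _),
   fun f _ _ hf0 hsub => hf0 (support_eq_empty.mp (Finset.subset_empty.mp hsub))⟩

lemma exists_dep {K : Ideal Poly} {d : ℕ} {S : Finset Mono}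
    (hdeg : ∀ u ∈ S, (∑ i ∈ u.support, u i) = d) (h : ¬ IndOn K d S) :
    ∃ f ∈ K, f.IsHomogeneous d ∧ f ≠ 0 ∧ f.support ⊆ S := by
  by_contra hcon
  push_neg at hcon
  exact h ⟨hdeg, hcon⟩

lemma mem_of_dep_insert {K : Ideal Poly} {d : ℕ} {S : Finset Mono} (hS : IndOn K d S)
    {f : Poly} (hf : f ∈ K) (hfd : f.IsHomogeneous d) (hf0 : f ≠ 0) {e : Mono}
    (hsub : f.support ⊆ insert e S) : e ∈ f.support := by
  by_contra he
  exact hS.2 f hf hfd hf0 (fun v hv =>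
    (Finset.mem_insert.mp (hsub hv)).resolve_left (fun h => he (h ▸ hv)))

/-! ### The finite ground set of degree-`d` monomials -/

lemma finite_mono (d : ℕ) : {u : Mono | (∑ i ∈ u.support, u i) = d}.Finite := by
  have hle : ∀ u : {u : Mono // (∑ i ∈ u.support, u i) = d}, ∀ i, u.1 i ≤ d := by
    rintro ⟨u, hu⟩ i
    by_cases hi : i ∈ u.support
    · exact hu ▸ Finset.single_le_sum (f := fun i => u i) (fun _ _ => Nat.zero_le _) hi
    · simp [Finsupp.notMem_support_iff.mp hi]
  have hinj : Function.Injective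
      (fun (u : {u : Mono // (∑ i ∈ u.support, u i) = d}) =>
        (fun i => (⟨u.1 i, Nat.lt_succ_of_le (hle u i)⟩ : Fin (d + 1)))) := by
    intro u v huv
    ext i
    exact congrArg Fin.val (congrFun huv i)
  have : Finite {u : Mono // (∑ i ∈ u.support, u i) = d} := Finite.of_injective _ hinj
  exact Set.finite_coe_iff.mp this

noncomputable def degMonos (d : ℕ) : Finset Mono := (finite_mono (n := n) d).toFinset

lemma mem_degMonos {d : ℕ} {u : Mono} : u ∈ degMonos (n := n) d ↔ (∑ i ∈ u.support, u i) = d :=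
  Set.Finite.mem_toFinset _

lemma indOn_sub_degMonos {K : Ideal Poly} {d : ℕ} {S : Finset Mono} (h : IndOn K d S) :
    S ⊆ degMonos d := fun u hu => mem_degMonos.mpr (h.1 u hu)

/-! ### Scaling and elimination -/

/-- Combine two elements of a tropical ideal, cancelling their supports at a common
support point `x`, while keeping every point where exactly one of them is supported. -/
lemma exists_combine {K : Ideal Poly} (hK : IsHomogTropicalIdeal K) {d : ℕ} {f g : Poly}
    (hf : f ∈ K) (hg : g ∈ K) (hfd : f.IsHomogeneous d) (hgd : g.IsHomogeneous d)
    {x : Mono} (hxf : x ∈ f.support) (hxg : x ∈ g.support) :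
    ∃ h ∈ K, h.IsHomogeneous d ∧ h.support ⊆ (f.support ∪ g.support).erase x ∧
      (∀ v ∈ f.support, v ∉ g.support → v ∈ h.support) ∧
      (∀ v ∈ g.support, v ∉ f.support → v ∈ h.support) := by
  have hxf0 : coeff x f ≠ 0 := mem_support_iff.mp hxf
  have hxg0 : coeff x g ≠ 0 := mem_support_iff.mp hxg
  set c : Tropical R₀ := coeff x f * (coeff x g)⁻¹ with hc
  have hcne : c ≠ 0 := by
    intro h0
    have := trop_eq_zero_iff.mp h0
    rw [untrop_mul, untrop_inv] at this
    rcases LinearOrderedAddCommGroupWithTop.add_eq_top.mp this with h | h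
    · exact untrop_ne_top hxf0 h
    · exact untrop_ne_top hxg0 (LinearOrderedAddCommGroupWithTop.neg_eq_top.mp h)
  set g' : Poly := C c * g with hg'
  have hg'K : g' ∈ K := Ideal.mul_mem_left _ _ hg
  have hg'd : g'.IsHomogeneous d := homog_C_mul hgd c
  have hg'supp : g'.support = g.support := support_C_mul hcne
  have hxeq : coeff x f = coeff x g' := by
    rw [hg', coeff_C_mul]
    apply untrop_injective
    rw [untrop_mul, hc, untrop_mul, untrop_inv]
    exact (cancel_add (untrop_ne_top hxg0)).symm
  obtain ⟨h, hhK, hhd, hhx, hhle, hheq⟩ :=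
    hK.2 d f hf g' hg'K hfd hg'd x hxeq hxf0
  refine ⟨h, hhK, hhd, ?_, ?_, ?_⟩
  · intro v hv
    rw [Finset.mem_erase]
    constructor
    · rintro rfl
      exact mem_support_iff.mp hv hhx
    · by_contra hvu
      rw [Finset.mem_union] at hvu
      push_neg at hvu
      have h1 : coeff v f = 0 := notMem_support_iff.mp hvu.1
      have h2 : coeff v g' = 0 := by
        rw [← notMem_support_iff, hg'supp]
        exact hvu.2
      have := hhle v
      rw [h1, h2, add_zero] at this
      exact mem_support_iff.mp hv (le_antisymm (Tropical.le_zero _) this)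
  · intro v hvf hvg
    have h2 : coeff v g' = 0 := by rw [← notMem_support_iff, hg'supp]; exact hvg
    have hne : coeff v f ≠ coeff v g' := by
      rw [h2]; exact mem_support_iff.mp hvf
    rw [mem_support_iff, hheq v hne, h2, add_zero]
    exact mem_support_iff.mp hvf
  · intro v hvg hvf
    have h1 : coeff v f = 0 := notMem_support_iff.mp hvf
    have h2 : coeff v g' ≠ 0 := by
      rw [← mem_support_iff, hg'supp]; exact hvg
    have hne : coeff v f ≠ coeff v g' := by rw [h1]; exact fun h => h2 h.symm
    rw [mem_support_iff, hheq v hne, h1, zero_add]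
    exact h2

/-! ### Locally maximal independent sets -/

def LocMax (K : Ideal Poly) (d : ℕ) (X B : Finset Mono) : Prop :=
  IndOn K d B ∧ B ⊆ X ∧ ∀ e ∈ X, e ∉ B → ¬ IndOn K d (insert e B)

lemma exists_locmax (K : Ideal Poly) (d : ℕ) (X S : Finset Mono) (hS : IndOn K d S)
    (hSX : S ⊆ X) :
    ∃ B, S ⊆ B ∧ LocMax K d X B ∧
      ∀ T, IndOn K d T → S ⊆ T → T ⊆ X → T.card ≤ B.card := by
  classical
  set F : Finset (Finset Mono) := X.powerset.filter (fun T => IndOn K d T ∧ S ⊆ T) with hF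
  have hSF : S ∈ F := by
    rw [hF, Finset.mem_filter, Finset.mem_powerset]
    exact ⟨hSX, hS, Finset.Subset.refl _⟩
  obtain ⟨B, hBF, hBmax⟩ := Finset.exists_max_image F Finset.card ⟨S, hSF⟩
  rw [hF, Finset.mem_filter, Finset.mem_powerset] at hBF
  refine ⟨B, hBF.2.2, ⟨hBF.2.1, hBF.1, ?_⟩, ?_⟩
  · intro e heX heB hind
    have hmem : insert e B ∈ F := by
      rw [hF, Finset.mem_filter, Finset.mem_powerset]
      exact ⟨Finset.insert_subset heX hBF.1, hind,
        hBF.2.2.trans (Finset.subset_insert _ _)⟩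
    have := hBmax _ hmem
    rw [Finset.card_insert_of_notMem heB] at this
    omega
  · intro T hT hST hTX
    exact hBmax T (by rw [hF, Finset.mem_filter, Finset.mem_powerset]; exact ⟨hTX, hT, hST⟩)

/-- The key matroid-theoretic fact, proved from the elimination axiom: all locally
maximal independent subsets of a fixed set `X` of degree-`d` monomials have the same
cardinality. -/
lemma locmax_card_le {K : Ideal Poly} (hK : IsHomogTropicalIdeal K) {d : ℕ}
    {X : Finset Mono} (hX : ∀ u ∈ X, (∑ i ∈ u.support, u i) = d) {M : Finset Mono}
    (hM : LocMax K d X M) :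
    ∀ k, ∀ N, (M \ N).card = k → LocMax K d X N → N.card ≤ M.card := by
  classical
  intro k
  induction k using Nat.strong_induction_on with
  | _ k IH =>
    intro N hk hN
    by_cases hMN : M ⊆ N
    · refine Finset.card_le_card (fun e he => ?_)
      by_contra heM
      exact hM.2.2 e (hN.2.1 he) heM (indOn_subset hN.1 (Finset.insert_subset he hMN))
    · obtain ⟨e, heM, heN⟩ := Finset.not_subset.mp hMN
      have heX : e ∈ X := hM.2.1 heM
      obtain ⟨f, hfK, hfd, hf0, hfsub⟩ :=
        exists_dep (fun u hu => (Finset.mem_insert.mp hu).elim (fun h => h ▸ hX e heX)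
          (fun h => hN.1.1 u h)) (hN.2.2 e heX heN)
      have hef : e ∈ f.support := mem_of_dep_insert hN.1 hfK hfd hf0 hfsub
      obtain ⟨x, hxf, hxM⟩ := Finset.not_subset.mp (hM.1.2 f hfK hfd hf0)
      have hxe : x ≠ e := fun h => hxM (h ▸ heM)
      have hxN : x ∈ N := ((Finset.mem_insert.mp (hfsub hxf)).resolve_left hxe)
      set N' : Finset Mono := insert e (N.erase x) with hN'
      have hN'X : N' ⊆ X :=
        Finset.insert_subset heX ((Finset.erase_subset _ _).trans hN.2.1)
      have hN'card : N'.card = N.card := by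
        rw [hN', Finset.card_insert_of_notMem (fun h => heN (Finset.mem_of_mem_erase h)),
          Finset.card_erase_of_mem hxN]
        have : 0 < N.card := Finset.card_pos.mpr ⟨x, hxN⟩
        omega
      have hN'ind : IndOn K d N' := by
        refine ⟨fun u hu => hX u (hN'X hu), ?_⟩
        intro g hgK hgd hg0 hgsub
        have hge : e ∈ g.support :=
          mem_of_dep_insert (indOn_subset hN.1 (Finset.erase_subset _ _)) hgK hgd hg0 hgsub
        have hgx : x ∉ g.support := fun h => by
          rcases Finset.mem_insert.mp (hgsub h) with h' | h'
          · exact hxe h'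
          · exact (Finset.notMem_erase x N) h'
        obtain ⟨h, hhK, hhd, hhsub, hdiff, -⟩ :=
          exists_combine hK hfK hgK hfd hgd hef hge
        have hxh : x ∈ h.support := hdiff x hxf hgx
        have hhN : h.support ⊆ N := by
          intro v hv
          have hv' := hhsub hv
          rw [Finset.mem_erase, Finset.mem_union] at hv'
          rcases hv'.2 with h' | h'
          · exact (Finset.mem_insert.mp (hfsub h')).resolve_left hv'.1
          · exact Finset.mem_of_mem_erase
              ((Finset.mem_insert.mp (hgsub h')).resolve_left hv'.1)
        exact hN.1.2 h hhK hhd (ne_zero_of_mem_support hxh) hhN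
      obtain ⟨N'', hN'N'', hN''lm, -⟩ := exists_locmax K d X N' hN'ind hN'X
      have hsub2 : M \ N'' ⊆ (M \ N).erase e := by
        intro v hv
        rw [Finset.mem_sdiff] at hv
        have hvN' : v ∉ N' := fun h => hv.2 (hN'N'' h)
        rw [hN', Finset.mem_insert] at hvN'
        push_neg at hvN'
        rw [Finset.mem_erase, Finset.mem_sdiff]
        refine ⟨hvN'.1, hv.1, fun hvN => ?_⟩
        exact hvN'.2 (Finset.mem_erase.mpr ⟨fun h => hxM (h ▸ hv.1), hvN⟩)
      have hlt : (M \ N'').card < k := by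
        have h1 : (M \ N'').card ≤ ((M \ N).erase e).card := Finset.card_le_card hsub2
        have h2 : e ∈ M \ N := Finset.mem_sdiff.mpr ⟨heM, heN⟩
        rw [Finset.card_erase_of_mem h2, hk] at h1
        have : 0 < k := hk ▸ Finset.card_pos.mpr ⟨e, h2⟩
        omega
      calc N.card = N'.card := hN'card.symm
        _ ≤ N''.card := Finset.card_le_card hN'N''
        _ ≤ M.card := IH _ hlt N'' rfl hN''lm

lemma locmax_card_hilbert {K : Ideal Poly} (hK : IsHomogTropicalIdeal K) {d : ℕ}
    {B : Finset Mono} (hB : LocMax K d (degMonos d) B) :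
    B.card = tropicalHilbert K d := by
  classical
  rw [tropicalHilbert_eq]
  set s : Set ℕ := {k : ℕ | ∃ S : Finset Mono, S.card = k ∧ IndOn K d S} with hs
  have hX : ∀ u ∈ degMonos (n := n) d, (∑ i ∈ u.support, u i) = d :=
    fun u hu => mem_degMonos.mp hu
  have hbdd : BddAbove s := by
    refine ⟨(degMonos (n := n) d).card, fun k hk => ?_⟩
    obtain ⟨S, hcard, hS⟩ := hk
    exact hcard ▸ Finset.card_le_card (indOn_sub_degMonos hS)
  have hmem : sSup s ∈ s := Nat.sSup_mem ⟨0, ∅, Finset.card_empty, indOn_empty K d⟩ hbdd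
  obtain ⟨S, hScard, hSind⟩ := hmem
  obtain ⟨Smax, hSSmax, hSmaxlm, -⟩ := exists_locmax K d (degMonos d) S hSind (indOn_sub_degMonos hSind)
  have h1 : Smax.card ≤ sSup s := le_csSup hbdd ⟨Smax, rfl, hSmaxlm.1⟩
  have h2 : sSup s ≤ Smax.card := hScard ▸ Finset.card_le_card hSSmax
  have h3 : B.card ≤ Smax.card := locmax_card_le hK hX hSmaxlm _ B rfl hB
  have h4 : Smax.card ≤ B.card := locmax_card_le hK hX hB _ Smax rfl hSmaxlm
  omega

/-! ### Transfer of dependence from `J` to `I` -/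

lemma dep_transfer {I J : Ideal Poly} (hI : IsHomogTropicalIdeal I)
    (hJ : IsHomogTropicalIdeal J) (hle : I ≤ J)
    (hHilb : ∀ d : ℕ, tropicalHilbert I d = tropicalHilbert J d) {d : ℕ} {g : Poly}
    (hgJ : g ∈ J) (hgd : g.IsHomogeneous d) (hg0 : g ≠ 0) :
    ∃ f ∈ I, f.IsHomogeneous d ∧ f ≠ 0 ∧ f.support ⊆ g.support := by
  classical
  by_contra hcon
  push_neg at hcon
  have hX : ∀ u ∈ degMonos (n := n) d, (∑ i ∈ u.support, u i) = d :=
    fun u hu => mem_degMonos.mp hu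
  have hgdeg : ∀ u ∈ g.support, (∑ i ∈ u.support, u i) = d :=
    fun u hu => degree_of_homog hgd (mem_support_iff.mp hu)
  have hSind : IndOn I d g.support := ⟨hgdeg, fun f hf hfd hf0 hsub => hcon f hf hfd hf0 hsub⟩
  obtain ⟨B, hgB, hBlm, -⟩ :=
    exists_locmax I d (degMonos d) g.support hSind (indOn_sub_degMonos hSind)
  have hBcard : B.card = tropicalHilbert I d := locmax_card_hilbert hI hBlm
  -- maximal J-independent subset of B
  obtain ⟨B₁, -, hB₁lm, hB₁max⟩ := exists_locmax J d B ∅ (indOn_empty J d)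
    (Finset.empty_subset _)
  have hB₁B : B₁ ⊆ B := hB₁lm.2.1
  have hB₁ne : B₁ ≠ B := by
    intro h
    exact hB₁lm.1.2 g hgJ hgd hg0 (h ▸ hgB)
  have hB₁lt : B₁.card < B.card := Finset.card_lt_card (ssubset_of_subset_of_ne hB₁B hB₁ne)
  -- a locally maximal J-independent extension of B₁ in the whole ground set
  obtain ⟨Jmax, hB₁Jmax, hJmaxlm, -⟩ :=
    exists_locmax J d (degMonos d) B₁ hB₁lm.1 (hB₁B.trans hBlm.2.1)
  have hJmaxcard : Jmax.card = tropicalHilbert J d := locmax_card_hilbert hJ hJmaxlm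
  have hJmaxB : ¬ Jmax ⊆ B := by
    intro h
    have := hB₁max Jmax hJmaxlm.1 (Finset.empty_subset _) h
    rw [hJmaxcard, ← hHilb d, ← hBcard] at this
    omega
  obtain ⟨e, heJmax, heB⟩ := Finset.not_subset.mp hJmaxB
  have heE : e ∈ degMonos (n := n) d := hJmaxlm.2.1 heJmax
  have hins : IndOn J d (insert e B₁) :=
    indOn_subset hJmaxlm.1 (Finset.insert_subset heJmax hB₁Jmax)
  -- B ∪ {e} is I-dependent
  obtain ⟨f₀, hf₀I, hf₀d, hf₀0, hf₀sub⟩ :=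
    exists_dep (fun u hu => (Finset.mem_insert.mp hu).elim (fun h => h ▸ hX e heE)
      (fun h => hBlm.1.1 u h)) (hBlm.2.2 e heE heB)
  have hef₀ : e ∈ f₀.support := mem_of_dep_insert hBlm.1 hf₀I hf₀d hf₀0 hf₀sub
  -- descent: no element of J can be supported in B ∪ {e} with e in its support
  have descent : ∀ k, ∀ f : Poly, f ∈ J → f.IsHomogeneous d → e ∈ f.support →
      f.support ⊆ insert e B → (f.support \ insert e B₁).card = k → False := by
    intro k
    induction k using Nat.strong_induction_on with
    | _ k IH =>
      intro f hfJ hfd hef hfsub hk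
      by_cases hsub : f.support ⊆ insert e B₁
      · exact hins.2 f hfJ hfd (ne_zero_of_mem_support hef) hsub
      · obtain ⟨x, hxf, hxB₁⟩ := Finset.not_subset.mp hsub
        have hxe : x ≠ e := fun h => hxB₁ (h ▸ Finset.mem_insert_self e B₁)
        have hxB : x ∈ B := (Finset.mem_insert.mp (hfsub hxf)).resolve_left hxe
        have hxB₁' : x ∉ B₁ := fun h => hxB₁ (Finset.mem_insert_of_mem h)
        obtain ⟨f₂, hf₂J, hf₂d, hf₂0, hf₂sub⟩ :=
          exists_dep (fun u hu => (Finset.mem_insert.mp hu).elim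
            (fun h => h ▸ hBlm.1.1 x hxB) (fun h => hB₁lm.1.1 u h))
            (hB₁lm.2.2 x hxB hxB₁')
        have hxf₂ : x ∈ f₂.support := mem_of_dep_insert hB₁lm.1 hf₂J hf₂d hf₂0 hf₂sub
        have hef₂ : e ∉ f₂.support := by
          intro h
          rcases Finset.mem_insert.mp (hf₂sub h) with h' | h'
          · exact hxe h'.symm
          · exact heB (hB₁B h')
        obtain ⟨h, hhJ, hhd, hhsub, hdiff, -⟩ :=
          exists_combine hJ hfJ hf₂J hfd hf₂d hxf hxf₂
        have heh : e ∈ h.support := hdiff e hef hef₂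
        have hhsub' : h.support ⊆ insert e B := by
          intro v hv
          have hv' := hhsub hv
          rw [Finset.mem_erase, Finset.mem_union] at hv'
          rcases hv'.2 with h' | h'
          · exact hfsub h'
          · rcases Finset.mem_insert.mp (hf₂sub h') with h'' | h''
            · exact absurd h'' hv'.1
            · exact Finset.mem_insert_of_mem (hB₁B h'')
        have hmeas : h.support \ insert e B₁ ⊆ (f.support \ insert e B₁).erase x := by
          intro v hv
          rw [Finset.mem_sdiff] at hv
          have hv' := hhsub hv.1
          rw [Finset.mem_erase, Finset.mem_union] at hv'
          rw [Finset.mem_erase, Finset.mem_sdiff]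
          refine ⟨hv'.1, ?_, hv.2⟩
          rcases hv'.2 with h' | h'
          · exact h'
          · rcases Finset.mem_insert.mp (hf₂sub h') with h'' | h''
            · exact absurd h'' hv'.1
            · exact absurd (Finset.mem_insert_of_mem h'') hv.2
        have hlt : (h.support \ insert e B₁).card < k := by
          have h1 := Finset.card_le_card hmeas
          have h2 : x ∈ f.support \ insert e B₁ := Finset.mem_sdiff.mpr ⟨hxf, hxB₁⟩
          rw [Finset.card_erase_of_mem h2, hk] at h1
          have : 0 < k := hk ▸ Finset.card_pos.mpr ⟨x, h2⟩
          omega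
        exact IH _ hlt h hhJ hhd heh hhsub' rfl
  exact descent _ f₀ (hle hf₀I) hf₀d hef₀ hf₀sub rfl

/-! ### From dependence transfer to membership -/

lemma mem_of_homog {I J : Ideal Poly} (hI : IsHomogTropicalIdeal I)
    (hJ : IsHomogTropicalIdeal J) (hle : I ≤ J)
    (hHilb : ∀ d : ℕ, tropicalHilbert I d = tropicalHilbert J d) (d : ℕ) :
    ∀ k, ∀ g : Poly, g ∈ J → g.IsHomogeneous d → g.support.card = k → g ∈ I := by
  intro k
  induction k using Nat.strong_induction_on with
  | _ k IH =>
    intro g hgJ hgd hk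
    by_cases hg0 : g = 0
    · exact hg0 ▸ I.zero_mem
    obtain ⟨f, hfI, hfd, hf0, hfsub⟩ := dep_transfer hI hJ hle hHilb hgJ hgd hg0
    have hfne : f.support.Nonempty :=
      Finset.nonempty_iff_ne_empty.mpr (fun h => hf0 (support_eq_empty.mp h))
    obtain ⟨u₀, hu₀f, hmax⟩ :=
      Finset.exists_max_image f.support (fun u => coeff u g * (coeff u f)⁻¹) hfne
    have hu₀g : u₀ ∈ g.support := hfsub hu₀f
    have hu₀f0 : coeff u₀ f ≠ 0 := mem_support_iff.mp hu₀f
    have hu₀g0 : coeff u₀ g ≠ 0 := mem_support_iff.mp hu₀g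
    set c : Tropical R₀ := coeff u₀ g * (coeff u₀ f)⁻¹ with hc
    set f' : Poly := C c * f with hf'
    have hf'I : f' ∈ I := Ideal.mul_mem_left _ _ hfI
    have hf'd : f'.IsHomogeneous d := homog_C_mul hfd c
    have hcoeff : ∀ v, coeff v f' = c * coeff v f := fun v => coeff_C_mul _ _ _
    have h1 : coeff u₀ f' = coeff u₀ g := by
      rw [hcoeff]
      apply untrop_injective
      rw [untrop_mul, hc, untrop_mul, untrop_inv]
      exact cancel_add (untrop_ne_top hu₀f0)
    have h2 : ∀ v, coeff v g ≤ coeff v f' := by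
      intro v
      by_cases hv : v ∈ f.support
      · have hmax' := hmax v hv
        rw [← Tropical.untrop_le_iff] at hmax' ⊢
        rw [hcoeff, untrop_mul]
        have hvf0 : untrop (coeff v f) ≠ ⊤ := untrop_ne_top (mem_support_iff.mp hv)
        calc untrop (coeff v g)
            = untrop (coeff v g) + -untrop (coeff v f) + untrop (coeff v f) :=
              (cancel_add hvf0).symm
          _ ≤ untrop c + untrop (coeff v f) := by
              refine add_le_add ?_ le_rfl
              have := hmax'
              rwa [untrop_mul, untrop_mul, untrop_inv, untrop_inv] at this
      · rw [hcoeff, notMem_support_iff.mp hv, mul_zero]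
        exact Tropical.le_zero _
    obtain ⟨h, hhJ, hhd, hh0, hhle, hheq⟩ :=
      hJ.2 d f' (hle hf'I) g hgJ hf'd hgd u₀ h1 (by rw [h1]; exact hu₀g0)
    have hsupph : h.support ⊆ g.support.erase u₀ := by
      intro v hv
      rw [Finset.mem_erase]
      refine ⟨?_, ?_⟩
      · rintro rfl
        exact mem_support_iff.mp hv hh0
      · by_contra hvg
        have hgv : coeff v g = 0 := notMem_support_iff.mp hvg
        have hf'v : coeff v f' = 0 := le_antisymm (Tropical.le_zero _) (hgv ▸ h2 v)
        have := hhle v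
        rw [hf'v, hgv, add_zero] at this
        exact mem_support_iff.mp hv (le_antisymm (Tropical.le_zero _) this)
    have hcard : h.support.card < k :=
      hk ▸ lt_of_le_of_lt (Finset.card_le_card hsupph) (Finset.card_erase_lt_of_mem hu₀g)
    have hhI : h ∈ I := IH _ hcard h hhJ hhd rfl
    have hgeq : g = f' + h := by
      apply MvPolynomial.ext
      intro v
      rw [coeff_add]
      by_cases hv : coeff v f' = coeff v g
      · have hle2 : coeff v g ≤ coeff v h := by
          have := hhle v
          rwa [hv, Tropical.add_self] at this
        rw [hv]
        exact (Tropical.add_eq_left hle2).symm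
      · have h3 : coeff v h = coeff v g := by
          rw [hheq v hv, Tropical.add_eq_right (h2 v)]
        rw [h3, Tropical.add_eq_right (h2 v)]
    rw [hgeq]
    exact I.add_mem hf'I hhI

end TropHilbAux

/-- If two homogeneous tropical ideals `I ⊆ J` of `R[x₀,…,xₙ]` have the same Hilbert
function, then `I = J`. -/
theorem eq_of_le_of_hilbert_eq {n : ℕ} {R₀ : Type*} [LinearOrderedAddCommGroupWithTop R₀]
    (I J : Ideal (MvPolynomial (Fin (n + 1)) (Tropical R₀)))
    (hI : IsHomogTropicalIdeal I) (hJ : IsHomogTropicalIdeal J) (hle : I ≤ J)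
    (hHilb : ∀ d : ℕ, tropicalHilbert I d = tropicalHilbert J d) :
    I = J := by
  refine le_antisymm hle ?_
  intro g hgJ
  rw [← MvPolynomial.sum_homogeneousComponent g]
  refine Ideal.sum_mem I (fun i _ => ?_)
  exact TropHilbAux.mem_of_homog hI hJ hle hHilb i _ (homogeneousComponent i g) (hJ.1 g hgJ i)
    (homogeneousComponent_isHomogeneous i g) rfl
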